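/- ∫₀^∞ (r/sinh r)² (coth r − 1/r)² dr = (1/3)(π²/6 − 1). -/

import Mathlib

open MeasureTheory Set Real Filter Topology

noncomputable section

namespace BPSProof

lemma exp_neg_two_mul (x : ℝ) : Real.exp (-(2 * x)) = (Real.exp x ^ 2)⁻¹ := by
  rw [Real.exp_neg]
  congr 1
  rw [show (2 : ℝ) * x = x + x by ring, Real.exp_add, sq]

lemma sinh_pos' {x : ℝ} (hx : 0 < x) : 0 < Real.sinh x := by positivity

/-! ### Part A : `∫ x in Ioi 0, x^2 / sinh x ^ 2 = π^2/6` -/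

lemma hasSum_term {x : ℝ} (hx : 0 < x) :
    HasSum (fun n : ℕ => 4 * (n : ℝ) * x ^ 2 * Real.exp (-(2 * (n : ℝ) * x)))
      (x ^ 2 / Real.sinh x ^ 2) := by
  have hrlt : Real.exp (-(2 * x)) < 1 := Real.exp_lt_one_iff.mpr (by linarith)
  have hnorm : ‖Real.exp (-(2 * x))‖ < 1 := by
    rw [Real.norm_eq_abs, abs_of_pos (Real.exp_pos _)]; exact hrlt
  have h := (hasSum_coe_mul_geometric_of_norm_lt_one hnorm).mul_left (4 * x ^ 2)
  have hterm : ∀ n : ℕ, 4 * (n : ℝ) * x ^ 2 * Real.exp (-(2 * (n : ℝ) * x))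
      = 4 * x ^ 2 * ((n : ℝ) * Real.exp (-(2 * x)) ^ n) := by
    intro n
    rw [← Real.exp_nat_mul]
    ring_nf
  have hsum : 4 * x ^ 2 * (Real.exp (-(2 * x)) / (1 - Real.exp (-(2 * x))) ^ 2)
      = x ^ 2 / Real.sinh x ^ 2 := by
    have hs : Real.sinh x ≠ 0 := by positivity
    have hu : Real.exp x ≠ 0 := (Real.exp_pos x).ne'
    have hr : Real.exp (-(2 * x)) ≠ 0 := (Real.exp_pos _).ne'
    have h1 : (1 : ℝ) - Real.exp (-(2 * x)) ≠ 0 := by linarith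
    have hstep : 4 * x ^ 2 * (Real.exp (-(2 * x)) / (1 - Real.exp (-(2 * x))) ^ 2)
        = 4 * x ^ 2 * Real.exp (-(2 * x)) / (1 - Real.exp (-(2 * x))) ^ 2 := by ring
    rw [hstep, div_eq_div_iff (by positivity) (by positivity)]
    rw [exp_neg_two_mul, Real.sinh_eq, Real.exp_neg]
    field_simp
    ring
  rw [← hsum]
  exact h.congr_fun hterm

lemma rpow_two_eq (t : ℝ) : t ^ ((2 : ℕ) : ℝ) = t ^ 2 := Real.rpow_natCast t 2

lemma integrable_term (n : ℕ) :
    IntegrableOn (fun x : ℝ => 4 * (n : ℝ) * x ^ 2 * Real.exp (-(2 * (n : ℝ) * x)))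
      (Ioi 0) := by
  rcases Nat.eq_zero_or_pos n with rfl | hn
  · simpa using integrableOn_zero
  · have hb : (0 : ℝ) < 2 * n := by positivity
    have h : IntegrableOn (fun x : ℝ => x ^ (2:ℝ) * Real.exp (-(2*(n:ℝ)) * x ^ (1:ℝ)))
        (Ioi 0) := integrableOn_rpow_mul_exp_neg_mul_rpow (by norm_num) (by norm_num) hb
    have h2 : IntegrableOn
        (fun x : ℝ => 4 * (n:ℝ) * (x ^ (2:ℝ) * Real.exp (-(2*(n:ℝ)) * x ^ (1:ℝ))))
        (Ioi 0) := h.const_mul _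
    apply h2.congr_fun ?_ measurableSet_Ioi
    intro t ht
    dsimp only
    rw [Real.rpow_one, show (t : ℝ) ^ (2 : ℝ) = t ^ 2 by
      rw [show (2:ℝ) = ((2:ℕ):ℝ) by norm_num, rpow_two_eq],
      show -(2*(n:ℝ)) * t = -(2*(n:ℝ)*t) by ring]
    ring

lemma integral_term (n : ℕ) :
    ∫ x in Ioi (0:ℝ), 4 * (n : ℝ) * x ^ 2 * Real.exp (-(2 * (n : ℝ) * x))
      = 1 / (n : ℝ) ^ 2 := by
  rcases Nat.eq_zero_or_pos n with rfl | hn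
  · simp
  · have hb : (0 : ℝ) < 2 * n := by positivity
    have key := Real.integral_rpow_mul_exp_neg_mul_Ioi (a := 3) (by norm_num) hb
    have h2 : ∀ t ∈ Ioi (0:ℝ),
        t ^ ((3:ℝ) - 1) * Real.exp (-(2 * (n:ℝ) * t))
          = t ^ 2 * Real.exp (-(2 * (n:ℝ) * t)) := by
      intro t ht
      rw [show (3:ℝ) - 1 = ((2:ℕ):ℝ) by norm_num, rpow_two_eq]
    rw [setIntegral_congr_fun measurableSet_Ioi h2] at key
    have h1 : ∫ x in Ioi (0:ℝ), 4 * (n : ℝ) * x ^ 2 * Real.exp (-(2 * (n : ℝ) * x))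
        = (4 * n) * ∫ t in Ioi (0:ℝ), t ^ 2 * Real.exp (-(2 * (n:ℝ) * t)) := by
      rw [← integral_const_mul]
      apply setIntegral_congr_fun measurableSet_Ioi
      intro t ht
      dsimp only
      ring
    rw [h1, key]
    have hΓ : Real.Gamma 3 = 2 := by
      rw [show (3:ℝ) = ((2:ℕ):ℝ) + 1 by norm_num, Real.Gamma_nat_eq_factorial]; norm_num
    rw [hΓ, show ((1:ℝ)/(2*n)) ^ (3:ℝ) = (1/(2*(n:ℝ))) ^ (3:ℕ) by
      rw [show (3:ℝ) = ((3:ℕ):ℝ) by norm_num, Real.rpow_natCast]]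
    have hn' : (n : ℝ) ≠ 0 := Nat.cast_ne_zero.mpr hn.ne'
    field_simp
    ring

lemma integral_g : ∫ x in Ioi (0:ℝ), x ^ 2 / Real.sinh x ^ 2 = Real.pi ^ 2 / 6 := by
  have hnorms : ∀ n : ℕ, (∫ x in Ioi (0:ℝ),
      ‖4 * (n : ℝ) * x ^ 2 * Real.exp (-(2 * (n : ℝ) * x))‖) = 1 / (n : ℝ) ^ 2 := by
    intro n
    rw [← integral_term n]
    apply setIntegral_congr_fun measurableSet_Ioi
    intro t ht
    have ht' : (0:ℝ) < t := ht
    dsimp only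
    rw [Real.norm_eq_abs, abs_of_nonneg (by positivity)]
  have hzeta : Summable (fun n : ℕ => (1:ℝ) / (n:ℝ) ^ 2) :=
    Real.summable_one_div_nat_pow.mpr one_lt_two
  have hsummable : Summable (fun n : ℕ => ∫ x in Ioi (0:ℝ),
      ‖4 * (n : ℝ) * x ^ 2 * Real.exp (-(2 * (n : ℝ) * x))‖) :=
    hzeta.congr fun n => (hnorms n).symm
  have key := integral_tsum_of_summable_integral_norm
    (F := fun (n : ℕ) (x : ℝ) => 4 * (n : ℝ) * x ^ 2 * Real.exp (-(2 * (n : ℝ) * x)))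
    (fun n => integrable_term n) hsummable
  have h1 : (∫ x in Ioi (0:ℝ), ∑' n : ℕ, 4 * (n : ℝ) * x ^ 2 * Real.exp (-(2 * (n : ℝ) * x)))
      = ∫ x in Ioi (0:ℝ), x ^ 2 / Real.sinh x ^ 2 := by
    apply setIntegral_congr_fun measurableSet_Ioi
    intro t ht
    exact (hasSum_term ht).tsum_eq
  rw [← h1, ← key]
  calc (∑' n : ℕ, ∫ x in Ioi (0:ℝ), 4 * (n : ℝ) * x ^ 2 * Real.exp (-(2 * (n : ℝ) * x)))
      = ∑' n : ℕ, 1 / (n:ℝ) ^ 2 := tsum_congr integral_term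
    _ = Real.pi ^ 2 / 6 := hasSum_zeta_two.tsum_eq

lemma integrable_g : IntegrableOn (fun x : ℝ => x ^ 2 / Real.sinh x ^ 2) (Ioi 0) := by
  have hcont : ContinuousOn (fun x : ℝ => x ^ 2 / Real.sinh x ^ 2) (Ioi 0) := by
    apply ContinuousOn.div (by fun_prop) (by fun_prop)
    intro x hx
    have : (0:ℝ) < Real.sinh x := sinh_pos' <| hx
    positivity
  rw [← Ioc_union_Ioi_eq_Ioi (zero_le_one (α := ℝ))]
  apply IntegrableOn.union
  · apply Integrable.mono' (integrable_const (1:ℝ))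
    · exact (hcont.mono Ioc_subset_Ioi_self).aestronglyMeasurable measurableSet_Ioc
    · filter_upwards [ae_restrict_mem measurableSet_Ioc] with x hx
      have hx0 : 0 < x := hx.1
      have hs : x ≤ Real.sinh x := (Real.self_lt_sinh_iff.mpr hx0).le
      have hsp : 0 < Real.sinh x := sinh_pos' <| hx0
      rw [Real.norm_eq_abs, abs_of_nonneg (by positivity)]
      rw [div_le_one (by positivity)]
      nlinarith
  · have hint : Integrable (fun x : ℝ => 16 * x ^ 2 * Real.exp (-(2 * x)))
        (volume.restrict (Ioi 1)) := by
      have h0 := ((integrable_term 1).mono_set (Ioi_subset_Ioi zero_le_one)).const_mul 4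
      apply h0.congr
      filter_upwards with x
      push_cast
      ring
    apply Integrable.mono' hint
    · exact (hcont.mono (Ioi_subset_Ioi zero_le_one)).aestronglyMeasurable measurableSet_Ioi
    · filter_upwards [ae_restrict_mem measurableSet_Ioi] with x hx
      have hx1 : (1:ℝ) < x := hx
      have hx0 : (0:ℝ) < x := by linarith
      have hsp : 0 < Real.sinh x := sinh_pos' <| hx0
      have hE : (2:ℝ) ≤ Real.exp x := by
        have := Real.add_one_le_exp (1:ℝ)
        have h2 := Real.exp_le_exp.mpr hx1.le
        linarith
      have hEpos : (0:ℝ) < Real.exp x := Real.exp_pos x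
      have hs4 : Real.exp x / 4 ≤ Real.sinh x := by
        rw [Real.sinh_eq, Real.exp_neg]
        have hinv : (Real.exp x)⁻¹ ≤ Real.exp x / 2 := by
          rw [inv_le_iff_one_le_mul₀ hEpos]
          nlinarith
        linarith
      rw [Real.norm_eq_abs, abs_of_nonneg (by positivity)]
      rw [exp_neg_two_mul]
      rw [div_le_iff₀ (by positivity)]
      have h1 : Real.exp x ^ 2 / 16 ≤ Real.sinh x ^ 2 := by nlinarith
      have h2 : (0:ℝ) < Real.exp x ^ 2 := by positivity
      calc x ^ 2 = (16 * x ^ 2 * (Real.exp x ^ 2)⁻¹) * (Real.exp x ^ 2 / 16) := by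
            field_simp
        _ ≤ (16 * x ^ 2 * (Real.exp x ^ 2)⁻¹) * Real.sinh x ^ 2 := by
            apply mul_le_mul_of_nonneg_left h1 (by positivity)
        _ = 16 * x ^ 2 * (Real.exp x ^ 2)⁻¹ * Real.sinh x ^ 2 := by ring

/-! ### Part B : the elementary antiderivative -/

/-- the elementary antiderivative (valid on `(0,∞)`) -/
def EF (x : ℝ) : ℝ :=
  1/3 * (x ^ 2 * Real.cosh x / Real.sinh x ^ 3 - 2 * x / Real.sinh x ^ 2
    + 1 / (Real.sinh x * (Real.cosh x + Real.sinh x)))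

/-- extension of `EF` by its limit at `0` -/
def Phi (x : ℝ) : ℝ := if x ≤ 0 then -(1/3) else EF x

lemma sinh_le_mul_cosh {x : ℝ} (hx : 0 ≤ x) : Real.sinh x ≤ x * Real.cosh x := by
  have hder : ∀ y : ℝ, HasDerivAt (fun t => t * Real.cosh t - Real.sinh t)
      (y * Real.sinh y) y := by
    intro y
    have h1 := ((hasDerivAt_id y).mul (Real.hasDerivAt_cosh y)).sub (Real.hasDerivAt_sinh y)
    refine HasDerivAt.congr_deriv h1 ?_
    simp [id_eq]
  have hmono : MonotoneOn (fun t => t * Real.cosh t - Real.sinh t) (Ici 0) := by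
    apply monotoneOn_of_deriv_nonneg (convex_Ici 0)
    · exact (continuous_id.mul Real.continuous_cosh).sub Real.continuous_sinh |>.continuousOn
    · exact fun y _ => (hder y).differentiableAt.differentiableWithinAt
    · intro y hy
      rw [interior_Ici] at hy
      rw [(hder y).deriv]
      have hy0 : (0:ℝ) < y := hy
      have := sinh_pos' hy0
      positivity
  have h := hmono (self_mem_Ici) (hx : x ∈ Ici 0) hx
  simpa using h

lemma xexp_le_sinh {x : ℝ} (hx : 0 < x) : x * Real.exp (-x) ≤ Real.sinh x := by
  have h1 : Real.exp (-x) ≤ 1 := Real.exp_le_one_iff.mpr (by linarith)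
  have h2 : x ≤ Real.sinh x := (Real.self_lt_sinh_iff.mpr hx).le
  have h3 : 0 < Real.exp (-x) := Real.exp_pos _
  nlinarith

lemma coth_sub_nonneg {x : ℝ} (hx : 0 < x) :
    0 ≤ Real.cosh x / Real.sinh x - 1 / x := by
  have hs := sinh_pos' hx
  rw [sub_nonneg, div_le_div_iff₀ hx hs]
  have := sinh_le_mul_cosh hx.le
  linarith

lemma coth_sub_le_one {x : ℝ} (hx : 0 < x) :
    Real.cosh x / Real.sinh x - 1 / x ≤ 1 := by
  have hs := sinh_pos' hx
  have hkey := xexp_le_sinh hx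
  rw [← Real.cosh_sub_sinh] at hkey
  rw [div_sub_div _ _ hs.ne' hx.ne', div_le_one (by positivity)]
  nlinarith

lemma integrand_le {x : ℝ} (hx : 0 < x) :
    (x / Real.sinh x) ^ 2 * (Real.cosh x / Real.sinh x - 1 / x) ^ 2
      ≤ x ^ 2 / Real.sinh x ^ 2 := by
  have hs := sinh_pos' hx
  have h1 := coth_sub_nonneg hx
  have h2 := coth_sub_le_one hx
  have hq : (Real.cosh x / Real.sinh x - 1 / x) ^ 2 ≤ 1 := by nlinarith
  calc (x / Real.sinh x) ^ 2 * (Real.cosh x / Real.sinh x - 1 / x) ^ 2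
      ≤ (x / Real.sinh x) ^ 2 * 1 := by
        apply mul_le_mul_of_nonneg_left hq (by positivity)
    _ = x ^ 2 / Real.sinh x ^ 2 := by rw [mul_one, div_pow]

lemma continuousOn_integrand :
    ContinuousOn (fun r : ℝ =>
      (r / Real.sinh r) ^ 2 * (Real.cosh r / Real.sinh r - 1 / r) ^ 2) (Ioi 0) := by
  have hs : ∀ x ∈ Ioi (0:ℝ), Real.sinh x ≠ 0 := fun x hx => (sinh_pos' hx).ne'
  have hx : ∀ x ∈ Ioi (0:ℝ), x ≠ 0 := fun x hx => ne_of_gt hx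
  apply ContinuousOn.mul
  · exact ((continuousOn_id.div Real.continuous_sinh.continuousOn hs).pow 2)
  · exact (((Real.continuous_cosh.continuousOn.div
      Real.continuous_sinh.continuousOn hs).sub
        (continuousOn_const.div continuousOn_id hx)).pow 2)

lemma integrable_integrand :
    IntegrableOn (fun r : ℝ =>
      (r / Real.sinh r) ^ 2 * (Real.cosh r / Real.sinh r - 1 / r) ^ 2) (Ioi 0) := by
  apply Integrable.mono' integrable_g
    (continuousOn_integrand.aestronglyMeasurable measurableSet_Ioi)
  filter_upwards [ae_restrict_mem measurableSet_Ioi] with x hx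
  have hx0 : (0:ℝ) < x := hx
  have hs := sinh_pos' hx0
  rw [Real.norm_eq_abs, abs_of_nonneg (by positivity)]
  exact integrand_le hx0

lemma hasDerivAt_EF {x : ℝ} (hx : 0 < x) :
    HasDerivAt EF (x ^ 2 / (3 * Real.sinh x ^ 2)
      - (x / Real.sinh x) ^ 2 * (Real.cosh x / Real.sinh x - 1 / x) ^ 2) x := by
  have hs := sinh_pos' hx
  have hsne : Real.sinh x ≠ 0 := hs.ne'
  have hcs : Real.cosh x + Real.sinh x ≠ 0 := by
    rw [Real.cosh_add_sinh]; exact (Real.exp_pos x).ne'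
  have h1 : HasDerivAt (fun y : ℝ => y ^ 2 * Real.cosh y)
      (2 * x * Real.cosh x + x ^ 2 * Real.sinh x) x := by
    have := (hasDerivAt_pow 2 x).mul (Real.hasDerivAt_cosh x)
    refine HasDerivAt.congr_deriv this ?_
    push_cast
    ring
  have h2 : HasDerivAt (fun y : ℝ => Real.sinh y ^ 3)
      (3 * Real.sinh x ^ 2 * Real.cosh x) x := by
    have := (Real.hasDerivAt_sinh x).fun_pow 3
    refine HasDerivAt.congr_deriv this ?_
    norm_num
  have h3 : HasDerivAt (fun y : ℝ => Real.sinh y ^ 2)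
      (2 * Real.sinh x * Real.cosh x) x := by
    have := (Real.hasDerivAt_sinh x).fun_pow 2
    refine HasDerivAt.congr_deriv this ?_
    push_cast
    ring
  have h4 : HasDerivAt (fun y : ℝ => 2 * y) 2 x := by
    simpa using (hasDerivAt_id x).const_mul (2:ℝ)
  have h5 : HasDerivAt (fun y : ℝ => Real.sinh y * (Real.cosh y + Real.sinh y))
      (Real.cosh x * (Real.cosh x + Real.sinh x)
        + Real.sinh x * (Real.sinh x + Real.cosh x)) x :=
    (Real.hasDerivAt_sinh x).mul ((Real.hasDerivAt_cosh x).add (Real.hasDerivAt_sinh x))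
  have hA := h1.div h2 (pow_ne_zero 3 hsne)
  have hB := h4.div h3 (pow_ne_zero 2 hsne)
  have hC := (hasDerivAt_const x (1:ℝ)).div h5 (mul_ne_zero hsne hcs)
  have hcomb := ((hA.sub hB).add hC).const_mul (1/3 : ℝ)
  have hfun : EF = fun y => 1/3 * (y ^ 2 * Real.cosh y / Real.sinh y ^ 3
      - 2 * y / Real.sinh y ^ 2
      + 1 / (Real.sinh y * (Real.cosh y + Real.sinh y))) := rfl
  rw [hfun]
  refine HasDerivAt.congr_deriv hcomb ?_
  have hE1 : (1:ℝ) < Real.exp x := by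
    have := Real.add_one_le_exp x; linarith
  have hE0 : Real.exp x ≠ 0 := (Real.exp_pos x).ne'
  have hE3 : Real.exp x ^ 2 - 1 ≠ 0 := by nlinarith
  have hsinh : Real.sinh x = (Real.exp x ^ 2 - 1) / (2 * Real.exp x) := by
    rw [Real.sinh_eq, Real.exp_neg]; field_simp
  have hcosh : Real.cosh x = (Real.exp x ^ 2 + 1) / (2 * Real.exp x) := by
    rw [Real.cosh_eq, Real.exp_neg]; field_simp
  rw [hsinh, hcosh]
  have hE4 : Real.exp x ^ 2 + 1 ≠ 0 := by positivity
  field_simp [hE3, hE0, hx.ne']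
  ring

lemma tendsto_EF_atTop : Tendsto EF atTop (𝓝 0) := by
  have he1 : Tendsto (fun x : ℝ => Real.exp (-x)) atTop (𝓝 0) :=
    Real.tendsto_exp_neg_atTop_nhds_zero
  have he2 : Tendsto (fun x : ℝ => Real.exp (-(2 * x))) atTop (𝓝 0) := by
    have : (fun x : ℝ => Real.exp (-(2 * x)))
        = fun x => Real.exp (-x) * Real.exp (-x) := by
      funext x; rw [← Real.exp_add, show -x + -x = -(2*x) by ring]
    rw [this]
    simpa using he1.mul he1
  have hx2e : Tendsto (fun x : ℝ => x ^ 2 * Real.exp (-(2 * x))) atTop (𝓝 0) := by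
    have : (fun x : ℝ => x ^ 2 * Real.exp (-(2 * x)))
        = fun x => (x ^ 2 * Real.exp (-x)) * Real.exp (-x) := by
      funext x; rw [mul_assoc, ← Real.exp_add, show -x + -x = -(2*x) by ring]
    rw [this]
    simpa using (Real.tendsto_pow_mul_exp_neg_atTop_nhds_zero 2).mul he1
  have hx1e : Tendsto (fun x : ℝ => x * Real.exp (-(2 * x))) atTop (𝓝 0) := by
    have : (fun x : ℝ => x * Real.exp (-(2 * x)))
        = fun x => (x ^ 1 * Real.exp (-x)) * Real.exp (-x) := by
      funext x; rw [pow_one, mul_assoc, ← Real.exp_add, show -x + -x = -(2*x) by ring]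
    rw [this]
    simpa using (Real.tendsto_pow_mul_exp_neg_atTop_nhds_zero 1).mul he1
  have hbig : Tendsto (fun x : ℝ =>
      1/3 * ((4 * (x ^ 2 * Real.exp (-(2 * x))) * (1 + Real.exp (-(2 * x))))
          / (1 - Real.exp (-(2 * x))) ^ 3
        - (8 * (x * Real.exp (-(2 * x)))) / (1 - Real.exp (-(2 * x))) ^ 2
        + (2 * Real.exp (-(2 * x))) / (1 - Real.exp (-(2 * x))))) atTop
      (𝓝 (1/3 * ((4 * 0 * (1 + 0)) / (1 - 0) ^ 3 - (8 * 0) / (1 - 0) ^ 2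
        + (2 * 0) / (1 - 0)))) := by
    apply Tendsto.const_mul
    apply Tendsto.add
    apply Tendsto.sub
    · exact Tendsto.div (((hx2e.const_mul 4).mul (tendsto_const_nhds.add he2)))
        (((tendsto_const_nhds.sub he2)).pow 3) (by norm_num)
    · exact Tendsto.div (hx1e.const_mul 8)
        (((tendsto_const_nhds.sub he2)).pow 2) (by norm_num)
    · exact Tendsto.div (he2.const_mul 2) (tendsto_const_nhds.sub he2) (by norm_num)
  have hval : (1:ℝ)/3 * ((4 * 0 * (1 + 0)) / (1 - 0) ^ 3 - (8 * 0) / (1 - 0) ^ 2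
      + (2 * 0) / (1 - 0)) = 0 := by norm_num
  rw [hval] at hbig
  apply hbig.congr'
  filter_upwards [eventually_gt_atTop (0:ℝ)] with x hx
  have hs := sinh_pos' hx
  have hE1 : (1:ℝ) < Real.exp x := by have := Real.add_one_le_exp x; linarith
  have hE0 : Real.exp x ≠ 0 := (Real.exp_pos x).ne'
  have hE3 : Real.exp x ^ 2 - 1 ≠ 0 := by nlinarith
  show _ = EF x
  have hsinh : Real.sinh x = (Real.exp x ^ 2 - 1) / (2 * Real.exp x) := by
    rw [Real.sinh_eq, Real.exp_neg]; field_simp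
  have hcosh : Real.cosh x = (Real.exp x ^ 2 + 1) / (2 * Real.exp x) := by
    rw [Real.cosh_eq, Real.exp_neg]; field_simp
  rw [EF, hsinh, hcosh, exp_neg_two_mul]
  field_simp [hE3, hE0]
  ring

lemma tendsto_sinh_div_self :
    Tendsto (fun x : ℝ => Real.sinh x / x) (𝓝[>] 0) (𝓝 1) := by
  have h := Real.hasDerivAt_sinh 0
  rw [hasDerivAt_iff_tendsto_slope] at h
  rw [Real.cosh_zero] at h
  have h2 : Tendsto (slope Real.sinh 0) (𝓝[>] (0:ℝ)) (𝓝 1) :=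
    h.mono_left (nhdsWithin_mono 0 fun y hy => ne_of_gt hy)
  apply h2.congr'
  filter_upwards [self_mem_nhdsWithin] with y hy
  simp [slope_def_field, Real.sinh_zero]

lemma tendsto_half : Tendsto (fun x : ℝ => x / 2) (𝓝[>] (0:ℝ)) (𝓝[>] (0:ℝ)) := by
  apply tendsto_nhdsWithin_of_tendsto_nhds_of_eventually_within
  · have : Tendsto (fun x : ℝ => x / 2) (𝓝 (0:ℝ)) (𝓝 ((0:ℝ)/2)) :=
      (continuous_id.div_const 2).tendsto 0
    simpa using this.mono_left nhdsWithin_le_nhds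
  · filter_upwards [self_mem_nhdsWithin] with x hx
    exact half_pos (mem_Ioi.mp hx)

lemma tendsto_cosh_aux :
    Tendsto (fun x : ℝ => (Real.cosh x - 1) / x ^ 2) (𝓝[>] 0) (𝓝 (1/2)) := by
  have hid : ∀ x : ℝ, Real.cosh x - 1 = 2 * Real.sinh (x / 2) ^ 2 := by
    intro x
    have h1 : Real.cosh x = Real.cosh (x/2) ^ 2 + Real.sinh (x/2) ^ 2 := by
      rw [← Real.cosh_two_mul]
      congr 1
      ring
    have h2 := Real.cosh_sq_sub_sinh_sq (x/2)
    linarith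
  have hcomp := tendsto_sinh_div_self.comp tendsto_half
  have hbig := (hcomp.mul hcomp).const_mul (1/2 : ℝ)
  have hval : (1:ℝ)/2 * (1 * 1) = 1/2 := by norm_num
  rw [hval] at hbig
  apply hbig.congr'
  filter_upwards [self_mem_nhdsWithin] with x hx
  have hx0 : (0:ℝ) < x := hx
  show 1/2 * (((fun y => Real.sinh y / y) ∘ fun y => y / 2) x
    * ((fun y => Real.sinh y / y) ∘ fun y => y / 2) x) = _
  simp only [Function.comp]
  rw [hid x]
  field_simp

lemma tendsto_sq_aux :
    Tendsto (fun x : ℝ => (x * Real.cosh x - Real.sinh x) ^ 2 / x ^ 3)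
      (𝓝[>] 0) (𝓝 0) := by
  have hx3 : Tendsto (fun x : ℝ => x ^ 3) (𝓝[>] (0:ℝ)) (𝓝 0) := by
    have : Tendsto (fun x : ℝ => x ^ 3) (𝓝 (0:ℝ)) (𝓝 ((0:ℝ) ^ 3)) :=
      (continuous_pow 3).tendsto 0
    simpa using this.mono_left nhdsWithin_le_nhds
  have hg : Tendsto (fun x : ℝ => ((Real.cosh x - 1) / x ^ 2) ^ 2 * x ^ 3)
      (𝓝[>] 0) (𝓝 0) := by
    simpa using (tendsto_cosh_aux.pow 2).mul hx3
  apply squeeze_zero' ?_ ?_ hg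
  · filter_upwards [self_mem_nhdsWithin] with x hx
    have hx0 : (0:ℝ) < x := hx
    positivity
  · filter_upwards [self_mem_nhdsWithin] with x hx
    have hx0 : (0:ℝ) < x := hx
    have h1 : 0 ≤ x * Real.cosh x - Real.sinh x := by
      have := sinh_le_mul_cosh hx0.le; linarith
    have h2 : x * Real.cosh x - Real.sinh x ≤ x * (Real.cosh x - 1) := by
      have := (Real.self_lt_sinh_iff.mpr hx0).le
      ring_nf
      nlinarith [Real.cosh_pos x]
    have hpow : (x * Real.cosh x - Real.sinh x) ^ 2 ≤ (x * (Real.cosh x - 1)) ^ 2 :=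
      pow_le_pow_left₀ h1 h2 2
    calc (x * Real.cosh x - Real.sinh x) ^ 2 / x ^ 3
        ≤ (x * (Real.cosh x - 1)) ^ 2 / x ^ 3 :=
          (div_le_div_iff_of_pos_right (by positivity)).mpr hpow
      _ = ((Real.cosh x - 1) / x ^ 2) ^ 2 * x ^ 3 := by
          field_simp

lemma tendsto_EF_zero : Tendsto EF (𝓝[>] 0) (𝓝 (-(1/3))) := by
  have hsinh0 : Tendsto Real.sinh (𝓝[>] (0:ℝ)) (𝓝 0) := by
    have : Tendsto Real.sinh (𝓝 (0:ℝ)) (𝓝 (Real.sinh 0)) := Real.continuous_sinh.tendsto 0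
    simpa using this.mono_left nhdsWithin_le_nhds
  have hcosh0 : Tendsto Real.cosh (𝓝[>] (0:ℝ)) (𝓝 1) := by
    have : Tendsto Real.cosh (𝓝 (0:ℝ)) (𝓝 (Real.cosh 0)) := Real.continuous_cosh.tendsto 0
    simpa using this.mono_left nhdsWithin_le_nhds
  have hZ1 := tendsto_sinh_div_self
  have hnum : Tendsto (fun x : ℝ => (x * Real.cosh x - Real.sinh x) ^ 2 / x ^ 3
      + (Real.sinh x / x) * (Real.cosh x - 2 * (Real.sinh x / x)))
      (𝓝[>] 0) (𝓝 (0 + 1 * (1 - 2 * 1))) :=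
    tendsto_sq_aux.add (hZ1.mul (hcosh0.sub (hZ1.const_mul 2)))
  have hden : Tendsto (fun x : ℝ => 3 * ((Real.sinh x / x) ^ 3
      * (Real.cosh x + Real.sinh x))) (𝓝[>] 0) (𝓝 (3 * (1 ^ 3 * (1 + 0)))) :=
    (((hZ1.pow 3).mul (hcosh0.add hsinh0))).const_mul 3
  have hbig := hnum.div hden (by norm_num)
  have hval : ((0:ℝ) + 1 * (1 - 2 * 1)) / (3 * (1 ^ 3 * (1 + 0))) = -(1/3) := by norm_num
  rw [hval] at hbig
  apply hbig.congr'
  filter_upwards [self_mem_nhdsWithin] with x hx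
  have hx0 : (0:ℝ) < x := hx
  have hs := sinh_pos' hx0
  have hcs : Real.cosh x + Real.sinh x ≠ 0 := by
    rw [Real.cosh_add_sinh]; exact (Real.exp_pos x).ne'
  show _ = EF x
  rw [EF]
  simp only [Pi.div_apply]
  field_simp [hs.ne', hx0.ne', hcs, -Real.cosh_add_sinh]
  linear_combination (0:ℝ)
    * (Real.cosh_add_sinh x)

end BPSProof

/-- the Prasad--Sommerfield integral
`∫₀^∞ (r/sinh r)² (coth r − 1/r)² dr = (1/3)(π²/6 − 1)`. -/
theorem bps_profile_integral :
    (∫ r in Ioi (0 : ℝ),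
        (r / Real.sinh r) ^ 2 * (Real.cosh r / Real.sinh r - 1 / r) ^ 2) =
      1 / 3 * (Real.pi ^ 2 / 6 - 1) := by
  have hPhi0 : BPSProof.Phi 0 = -(1/3) := by simp [BPSProof.Phi]
  have hPhiE : ∀ x : ℝ, 0 < x → BPSProof.Phi x = BPSProof.EF x := fun x hx => by
    simp [BPSProof.Phi, not_le.mpr hx]
  have hderiv : ∀ x ∈ Ioi (0:ℝ), HasDerivAt BPSProof.Phi
      (x ^ 2 / (3 * Real.sinh x ^ 2)
        - (x / Real.sinh x) ^ 2 * (Real.cosh x / Real.sinh x - 1 / x) ^ 2) x := by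
    intro x hx
    apply (BPSProof.hasDerivAt_EF hx).congr_of_eventuallyEq
    filter_upwards [isOpen_Ioi.mem_nhds hx] with y hy
    exact hPhiE y hy
  have hcont : ContinuousWithinAt BPSProof.Phi (Ici 0) 0 := by
    unfold ContinuousWithinAt
    rw [hPhi0, ← Set.Ioi_insert, nhdsWithin_insert, tendsto_sup]
    constructor
    · simpa [hPhi0] using tendsto_pure_nhds BPSProof.Phi 0
    · apply BPSProof.tendsto_EF_zero.congr'
      filter_upwards [self_mem_nhdsWithin] with y hy
      exact (hPhiE y hy).symm
  have hg3 : IntegrableOn (fun x : ℝ => x ^ 2 / (3 * Real.sinh x ^ 2)) (Ioi 0) := by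
    apply (BPSProof.integrable_g.const_mul (1/3 : ℝ)).congr
    filter_upwards with x
    ring
  have hIntD : IntegrableOn (fun x : ℝ => x ^ 2 / (3 * Real.sinh x ^ 2)
      - (x / Real.sinh x) ^ 2 * (Real.cosh x / Real.sinh x - 1 / x) ^ 2) (Ioi 0) :=
    hg3.sub BPSProof.integrable_integrand
  have htop : Tendsto BPSProof.Phi atTop (𝓝 0) := by
    apply BPSProof.tendsto_EF_atTop.congr'
    filter_upwards [eventually_gt_atTop (0:ℝ)] with y hy
    exact (hPhiE y hy).symm
  have key := integral_Ioi_of_hasDerivAt_of_tendsto hcont hderiv hIntD htop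
  rw [hPhi0] at key
  have hsub := integral_sub hg3 BPSProof.integrable_integrand
  have hgval : ∫ x in Ioi (0:ℝ), x ^ 2 / (3 * Real.sinh x ^ 2)
      = 1/3 * (Real.pi ^ 2 / 6) := by
    have hfun : (fun x : ℝ => x ^ 2 / (3 * Real.sinh x ^ 2))
        = fun x => (1/3) * (x ^ 2 / Real.sinh x ^ 2) := by funext x; ring
    rw [hfun, integral_const_mul, BPSProof.integral_g]
  rw [hsub, hgval] at key
  linarith [key]
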